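/- Uniqueness (Theorem 1; Lemma A.4): In any disclosure game, at most one function V : E → ℝ satisfies the Theorem-1 conditions; that is, if V and W both satisfy conditions (1)–(3), then V = W. -/

import Mathlib

open scoped BigOperators

universe u

/-- A disclosure game: a countable evidence space `E` with a disclosure rule
(a preorder `r`, where `r m e` means message `m` is feasible for endowment `e`)
satisfying the lower-bound condition (A4′), a prior `π0 ∈ (0,1)`, evidence
distributions `FG`, `FB` in each state, and a strictly increasing receiver
response `φ` on `[0,1]`. -/
structure DGame (E : Type u) where
  r : E → E → Prop
  r_refl : ∀ e, r e e
  r_trans : ∀ {a b c : E}, r a b → r b c → r a c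
  a4 : ∀ f : ℕ → E, (∀ n, r (f (n + 1)) (f n)) → ∃ N, ∀ n ≥ N, r (f N) (f n)
  π0 : ℝ
  π0_pos : 0 < π0
  π0_lt_one : π0 < 1
  FG : E → ℝ
  FB : E → ℝ
  FG_nonneg : ∀ e, 0 ≤ FG e
  FB_nonneg : ∀ e, 0 ≤ FB e
  FG_hasSum : HasSum FG 1
  FB_hasSum : HasSum FB 1
  FGB_pos : ∀ e, 0 < FG e + FB e
  φ : ℝ → ℝ
  φ_mono : StrictMonoOn φ (Set.Icc (0 : ℝ) 1)

namespace DGame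

variable {E : Type u} (G : DGame E)

/-- The posterior belief `ν(A)` that the state is good conditional on the
evidence lying in `A`. -/
noncomputable def nu (A : Set E) : ℝ :=
  ((∑' e : A, G.FG e) * G.π0) /
    ((∑' e : A, G.FG e) * G.π0 + (∑' e : A, G.FB e) * (1 - G.π0))

/-- `ξ(A) = φ(ν(A))`. -/
noncomputable def xi (A : Set E) : ℝ := G.φ (G.nu A)

/-- `L` is a (nonempty) lower contour set in `A`. -/
def IsLCS (A L : Set E) : Prop :=
  L.Nonempty ∧ L ⊆ A ∧ ∀ e ∈ L, ∀ e' ∈ A, G.r e' e → e' ∈ L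

/-- The Theorem-1 conditions on a candidate value function `V`. -/
def Thm1Conds (V : E → ℝ) : Prop :=
  (∀ e e', G.r e e' → V e ≤ V e') ∧
  (∀ x ∈ Set.range V, G.xi (V ⁻¹' {x}) = x) ∧
  (∀ x ∈ Set.range V, ∀ L : Set E, G.IsLCS (V ⁻¹' {x}) L → x ≤ G.xi L)

/-- A truth-leaning equilibrium `(σ, act, μ)` of the disclosure game. -/
structure Eqm where
  σ : E → E → ℝ
  act : E → ℝ
  μ : E → ℝ
  σ_nonneg : ∀ e m, 0 ≤ σ e m
  σ_hasSum : ∀ e, HasSum (σ e) 1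
  feasible : ∀ e m, 0 < σ e m → G.r m e
  μ_mem : ∀ m, μ m ∈ Set.Icc (0 : ℝ) 1
  sender_opt : ∀ e m, 0 < σ e m → ∀ m', G.r m' e → act m' ≤ act m
  receiver_opt : ∀ m, act m = G.φ (μ m)
  bayes : ∀ m, (∃ e, 0 < σ e m) →
    μ m = (∑' e : {e : E // G.r m e}, σ e.1 m * G.FG e.1 * G.π0) /
      (∑' e : {e : E // G.r m e}, σ e.1 m * (G.FG e.1 * G.π0 + G.FB e.1 * (1 - G.π0)))
  truth_leaning : ∀ e, (∀ m, G.r m e → act m ≤ act e) → σ e e = 1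
  offpath : ∀ m, (¬ ∃ e, 0 < σ e m) → μ m = G.nu {m}

/-- `V` is the sender's value function of the equilibrium `Q`. -/
def IsValueFn (Q : G.Eqm) (V : E → ℝ) : Prop :=
  ∀ e m, 0 < Q.σ e m → V e = Q.act m

end DGame

section Aux

open ENNReal

variable {E : Type u} (G : DGame E)

/-- good-state mass of a set (unnormalized). -/
noncomputable def sgR (A : Set E) : ℝ := (∑' e : A, G.FG e) * G.π0

/-- bad-state mass of a set (unnormalized). -/
noncomputable def sbR (A : Set E) : ℝ := (∑' e : A, G.FB e) * (1 - G.π0)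

lemma nu_eq (A : Set E) : G.nu A = sgR G A / (sgR G A + sbR G A) := rfl

lemma sumG (A : Set E) : Summable (fun e : ↥A => G.FG e) :=
  G.FG_hasSum.summable.subtype A

lemma sumB (A : Set E) : Summable (fun e : ↥A => G.FB e) :=
  G.FB_hasSum.summable.subtype A

lemma sg_nonneg (A : Set E) : 0 ≤ sgR G A :=
  mul_nonneg (tsum_nonneg fun i => G.FG_nonneg _) G.π0_pos.le

lemma sb_nonneg (A : Set E) : 0 ≤ sbR G A :=
  mul_nonneg (tsum_nonneg fun i => G.FB_nonneg _) (by linarith [G.π0_lt_one])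


lemma pt_pos (e : E) : 0 < G.FG e * G.π0 + G.FB e * (1 - G.π0) := by
  have h := G.FGB_pos e
  have hg := G.FG_nonneg e
  have hb := G.FB_nonneg e
  have h1 : 0 < 1 - G.π0 := by linarith [G.π0_lt_one]
  rcases hg.lt_or_eq with hg' | hg'
  · nlinarith [mul_pos hg' G.π0_pos, mul_nonneg hb h1.le]
  · have hb' : 0 < G.FB e := by linarith
    nlinarith [mul_pos hb' h1, mul_nonneg hg G.π0_pos.le]

lemma mu_pos {A : Set E} (hA : A.Nonempty) : 0 < sgR G A + sbR G A := by
  obtain ⟨e₀, he₀⟩ := hA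
  have hG : G.FG e₀ ≤ ∑' e : A, G.FG e :=
    Summable.le_tsum (sumG G A) ⟨e₀, he₀⟩ (fun j _ => G.FG_nonneg _)
  have hB : G.FB e₀ ≤ ∑' e : A, G.FB e :=
    Summable.le_tsum (sumB G A) ⟨e₀, he₀⟩ (fun j _ => G.FB_nonneg _)
  have h1 : 0 < G.FG e₀ * G.π0 + G.FB e₀ * (1 - G.π0) := pt_pos G e₀
  have h2 : G.FG e₀ * G.π0 ≤ sgR G A := mul_le_mul_of_nonneg_right hG G.π0_pos.le
  have h3 : G.FB e₀ * (1 - G.π0) ≤ sbR G A :=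
    mul_le_mul_of_nonneg_right hB (by linarith [G.π0_lt_one])
  linarith

lemma nu_mem (A : Set E) : G.nu A ∈ Set.Icc (0 : ℝ) 1 := by
  rw [nu_eq]
  constructor
  · exact div_nonneg (sg_nonneg G A) (by linarith [sg_nonneg G A, sb_nonneg G A])
  · exact div_le_one_of_le₀ (by linarith [sb_nonneg G A])
      (by linarith [sg_nonneg G A, sb_nonneg G A])

lemma sg_eq {A : Set E} (hA : A.Nonempty) :
    sgR G A = G.nu A * (sgR G A + sbR G A) := by
  rw [nu_eq, div_mul_cancel₀ _ (mu_pos G hA).ne']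

lemma tsum_split (f : E → ℝ) (hf : Summable f) {A P : Set E} (h : A ⊆ P) :
    ∑' e : P, f e = ∑' e : ↥(P \ A), f e + ∑' e : A, f e := by
  conv_lhs => rw [← Set.diff_union_of_subset h]
  exact (hf.subtype _).tsum_union_disjoint Set.disjoint_sdiff_left (hf.subtype _)

lemma sg_split {A P : Set E} (h : A ⊆ P) :
    sgR G P = sgR G (P \ A) + sgR G A := by
  unfold sgR
  rw [tsum_split G.FG G.FG_hasSum.summable h]; ring

lemma sb_split {A P : Set E} (h : A ⊆ P) :
    sbR G P = sbR G (P \ A) + sbR G A := by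
  unfold sbR
  rw [tsum_split G.FB G.FB_hasSum.summable h]; ring

/-- Upper bound: on each `V`-level, the part of the level where `V < W` has
posterior at most the posterior of the whole level. -/
lemma upper {V W : E → ℝ} (hV : G.Thm1Conds V) (hW : G.Thm1Conds W) (b : ℝ)
    (hne : ({e | V e < W e} ∩ V ⁻¹' {b}).Nonempty) :
    sgR G ({e | V e < W e} ∩ V ⁻¹' {b}) ≤
      G.nu (V ⁻¹' {b}) *
        (sgR G ({e | V e < W e} ∩ V ⁻¹' {b}) + sbR G ({e | V e < W e} ∩ V ⁻¹' {b})) := by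
  set A : Set E := {e | V e < W e} ∩ V ⁻¹' {b} with hA
  set P : Set E := V ⁻¹' {b} with hP
  obtain ⟨e₀, he₀⟩ := hne
  have hb : b ∈ Set.range V := ⟨e₀, he₀.2⟩
  have hxiP : G.φ (G.nu P) = b := hV.2.1 b hb
  have hPne : P.Nonempty := ⟨e₀, he₀.2⟩
  have hAP : A ⊆ P := Set.inter_subset_right
  rcases Set.eq_empty_or_nonempty (P \ A) with hLc | hLc
  · have hPA : A = P := Set.Subset.antisymm hAP (by
      intro x hx
      by_contra hxA
      exact (Set.eq_empty_iff_forall_notMem.mp hLc x) ⟨hx, hxA⟩)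
    rw [hPA]
    exact (sg_eq G hPne).le
  · have hLCS : G.IsLCS P (P \ A) := by
      refine ⟨hLc, Set.diff_subset, ?_⟩
      intro e he e' he' hr
      have heb : V e = b := he.1
      have hWe : W e ≤ b := by
        have h1 : ¬ (V e < W e) := fun hc => he.2 ⟨hc, he.1⟩
        linarith [not_lt.mp h1]
      refine ⟨he', ?_⟩
      intro hc
      have h2 : W e' ≤ W e := hW.1 e' e hr
      have h3 : V e' = b := he'
      have h4 : V e' < W e' := hc.1
      linarith
    have hle : b ≤ G.φ (G.nu (P \ A)) := hV.2.2 b hb _ hLCS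
    have hq : G.nu P ≤ G.nu (P \ A) :=
      (G.φ_mono.le_iff_le (nu_mem G P) (nu_mem G (P \ A))).mp (by rw [hxiP]; exact hle)
    have hLcpos : 0 < sgR G (P \ A) + sbR G (P \ A) := mu_pos G hLc
    have h1 : G.nu P * (sgR G (P \ A) + sbR G (P \ A)) ≤ sgR G (P \ A) := by
      rw [nu_eq] at hq
      exact (le_div_iff₀ hLcpos).mp hq
    have h2 : sgR G P = G.nu P * (sgR G P + sbR G P) := sg_eq G hPne
    have h3 : sgR G P = sgR G (P \ A) + sgR G A := sg_split G hAP
    have h4 : sbR G P = sbR G (P \ A) + sbR G A := sb_split G hAP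
    rw [h3, h4] at h2
    have h5 : sgR G (P \ A) + sgR G A =
        G.nu P * (sgR G (P \ A) + sbR G (P \ A)) + G.nu P * (sgR G A + sbR G A) := by
      linear_combination h2
    linarith [h1, h5]

/-- Lower bound: on each `W`-level, the part of the level where `V < W` is a
lower contour set, hence its posterior is at least that of the level. -/
lemma lower {V W : E → ℝ} (hV : G.Thm1Conds V) (hW : G.Thm1Conds W) (z : ℝ)
    (hne : ({e | V e < W e} ∩ W ⁻¹' {z}).Nonempty) :
    G.nu (W ⁻¹' {z}) *
        (sgR G ({e | V e < W e} ∩ W ⁻¹' {z}) + sbR G ({e | V e < W e} ∩ W ⁻¹' {z})) ≤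
      sgR G ({e | V e < W e} ∩ W ⁻¹' {z}) := by
  set Y : Set E := {e | V e < W e} ∩ W ⁻¹' {z} with hY
  set Q : Set E := W ⁻¹' {z} with hQ
  obtain ⟨e₀, he₀⟩ := hne
  have hz : z ∈ Set.range W := ⟨e₀, he₀.2⟩
  have hxiQ : G.φ (G.nu Q) = z := hW.2.1 z hz
  have hLCS : G.IsLCS Q Y := by
    refine ⟨⟨e₀, he₀⟩, Set.inter_subset_right, ?_⟩
    intro e he e' he' hr
    have h1 : V e' ≤ V e := hV.1 e' e hr
    have h2 : W e = z := he.2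
    have h3 : W e' = z := he'
    have h4 : V e < W e := he.1
    exact ⟨by simp only [Set.mem_setOf_eq]; linarith, he'⟩
  have hle : z ≤ G.φ (G.nu Y) := hW.2.2 z hz Y hLCS
  have hq : G.nu Q ≤ G.nu Y :=
    (G.φ_mono.le_iff_le (nu_mem G Q) (nu_mem G Y)).mp (by rw [hxiQ]; exact hle)
  have hYpos : 0 < sgR G Y + sbR G Y := mu_pos G ⟨e₀, he₀⟩
  rw [nu_eq] at hq
  exact (le_div_iff₀ hYpos).mp hq

lemma gE_sum (A : Set E) :
    ∑' e : A, ENNReal.ofReal (G.FG e * G.π0) = ENNReal.ofReal (sgR G A) := by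
  rw [← ENNReal.ofReal_tsum_of_nonneg
    (fun e : ↥A => mul_nonneg (G.FG_nonneg _) G.π0_pos.le)
    ((sumG G A).mul_right _)]
  congr 1
  exact tsum_mul_right

lemma mE_sum (A : Set E) :
    ∑' e : A, ENNReal.ofReal (G.FG e * G.π0 + G.FB e * (1 - G.π0)) =
      ENNReal.ofReal (sgR G A + sbR G A) := by
  rw [← ENNReal.ofReal_tsum_of_nonneg
    (fun e : ↥A => add_nonneg (mul_nonneg (G.FG_nonneg _) G.π0_pos.le)
      (mul_nonneg (G.FB_nonneg _) (by linarith [G.π0_lt_one])))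
    (((sumG G A).mul_right _).add ((sumB G A).mul_right _))]
  congr 1
  rw [Summable.tsum_add ((sumG G A).mul_right _) ((sumB G A).mul_right _)]
  unfold sgR sbR
  rw [tsum_mul_right, tsum_mul_right]

/-- Fibering a subtype sum over the levels of a function. -/
def fiberEquiv (S : Set E) (v : E → ℝ) : ↥S ≃ Σ b : ℝ, ↥(S ∩ v ⁻¹' {b}) where
  toFun e := ⟨v e.1, ⟨e.1, e.2, rfl⟩⟩
  invFun p := ⟨p.2.1, p.2.2.1⟩
  left_inv e := rfl
  right_inv p := by
    rcases p with ⟨b, e, heS, hev⟩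
    have : v e = b := hev
    subst this
    rfl

lemma regroup (S : Set E) (v : E → ℝ) (f : E → ℝ≥0∞) :
    ∑' e : S, f e = ∑' b : ℝ, ∑' e : ↥(S ∩ v ⁻¹' {b}), f e := by
  rw [← (fiberEquiv S v).symm.tsum_eq (fun e : ↥S => f e)]
  exact ENNReal.tsum_sigma' _

/-- Key step: the set where `V < W` is empty. -/
lemma key {V W : E → ℝ} (hV : G.Thm1Conds V) (hW : G.Thm1Conds W) :
    {e | V e < W e} = ∅ := by
  by_contra h
  obtain ⟨e₀, he₀⟩ := Set.nonempty_iff_ne_empty.mpr h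
  set D : Set E := {e | V e < W e} with hD
  set gE : E → ℝ≥0∞ := fun e => ENNReal.ofReal (G.FG e * G.π0) with hgE
  set mE : E → ℝ≥0∞ := fun e => ENNReal.ofReal (G.FG e * G.π0 + G.FB e * (1 - G.π0))
    with hmE
  set qv : E → ℝ≥0∞ := fun e => ENNReal.ofReal (G.nu (V ⁻¹' {V e})) with hqv
  set pw : E → ℝ≥0∞ := fun e => ENNReal.ofReal (G.nu (W ⁻¹' {W e})) with hpw
  -- pointwise strict comparison on D
  have hpoint : ∀ e : E, e ∈ D → G.nu (V ⁻¹' {V e}) < G.nu (W ⁻¹' {W e}) := by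
    intro e he
    have h1 : G.φ (G.nu (V ⁻¹' {V e})) = V e := hV.2.1 (V e) ⟨e, rfl⟩
    have h2 : G.φ (G.nu (W ⁻¹' {W e})) = W e := hW.2.1 (W e) ⟨e, rfl⟩
    have h3 : V e < W e := he
    by_contra hc
    have h4 : G.nu (W ⁻¹' {W e}) ≤ G.nu (V ⁻¹' {V e}) := not_lt.mp hc
    have h5 := (G.φ_mono.le_iff_le (nu_mem G (W ⁻¹' {W e})) (nu_mem G (V ⁻¹' {V e}))).mpr h4
    rw [h1, h2] at h5
    linarith
  -- Step 1 : total good mass of D ≤ sum of qv e * mE e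
  have step1 : ∑' e : D, gE e ≤ ∑' e : D, qv e * mE e := by
    rw [regroup D V gE, regroup D V (fun e => qv e * mE e)]
    refine ENNReal.tsum_le_tsum fun b => ?_
    rcases Set.eq_empty_or_nonempty (D ∩ V ⁻¹' {b}) with hb | hb
    · haveI : IsEmpty ↥(D ∩ V ⁻¹' {b}) := Set.isEmpty_coe_sort.mpr hb
      rw [tsum_empty]
      exact zero_le
    · calc ∑' e : ↥(D ∩ V ⁻¹' {b}), gE e
          = ENNReal.ofReal (sgR G (D ∩ V ⁻¹' {b})) := gE_sum G _
        _ ≤ ENNReal.ofReal (G.nu (V ⁻¹' {b}) *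
              (sgR G (D ∩ V ⁻¹' {b}) + sbR G (D ∩ V ⁻¹' {b}))) :=
            ENNReal.ofReal_le_ofReal (upper G hV hW b hb)
        _ = ENNReal.ofReal (G.nu (V ⁻¹' {b})) *
              ENNReal.ofReal (sgR G (D ∩ V ⁻¹' {b}) + sbR G (D ∩ V ⁻¹' {b})) :=
            ENNReal.ofReal_mul (nu_mem G _).1
        _ = ENNReal.ofReal (G.nu (V ⁻¹' {b})) * ∑' e : ↥(D ∩ V ⁻¹' {b}), mE e := by
            rw [mE_sum]
        _ = ∑' e : ↥(D ∩ V ⁻¹' {b}), ENNReal.ofReal (G.nu (V ⁻¹' {b})) * mE e :=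
            ENNReal.tsum_mul_left.symm
        _ = ∑' e : ↥(D ∩ V ⁻¹' {b}), qv e * mE e := by
            refine tsum_congr fun e => ?_
            have hVb : V e.1 = b := e.2.2
            rw [hqv]
            simp only [hVb]
  -- Step 3 : sum of pw e * mE e ≤ total good mass of D
  have step3 : ∑' e : D, pw e * mE e ≤ ∑' e : D, gE e := by
    rw [regroup D W gE, regroup D W (fun e => pw e * mE e)]
    refine ENNReal.tsum_le_tsum fun z => ?_
    rcases Set.eq_empty_or_nonempty (D ∩ W ⁻¹' {z}) with hz | hz
    · haveI : IsEmpty ↥(D ∩ W ⁻¹' {z}) := Set.isEmpty_coe_sort.mpr hz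
      rw [tsum_empty]
      exact zero_le
    · calc ∑' e : ↥(D ∩ W ⁻¹' {z}), pw e * mE e
          = ∑' e : ↥(D ∩ W ⁻¹' {z}), ENNReal.ofReal (G.nu (W ⁻¹' {z})) * mE e := by
            refine tsum_congr fun e => ?_
            have hWz : W e.1 = z := e.2.2
            rw [hpw]
            simp only [hWz]
        _ = ENNReal.ofReal (G.nu (W ⁻¹' {z})) * ∑' e : ↥(D ∩ W ⁻¹' {z}), mE e :=
            ENNReal.tsum_mul_left
        _ = ENNReal.ofReal (G.nu (W ⁻¹' {z})) *
              ENNReal.ofReal (sgR G (D ∩ W ⁻¹' {z}) + sbR G (D ∩ W ⁻¹' {z})) := by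
            rw [mE_sum]
        _ = ENNReal.ofReal (G.nu (W ⁻¹' {z}) *
              (sgR G (D ∩ W ⁻¹' {z}) + sbR G (D ∩ W ⁻¹' {z}))) :=
            (ENNReal.ofReal_mul (nu_mem G _).1).symm
        _ ≤ ENNReal.ofReal (sgR G (D ∩ W ⁻¹' {z})) :=
            ENNReal.ofReal_le_ofReal (lower G hV hW z hz)
        _ = ∑' e : ↥(D ∩ W ⁻¹' {z}), gE e := (gE_sum G _).symm
  -- Step 2 : strict middle inequality
  have hmEfin : ∑' e : D, mE e ≠ ⊤ := by
    rw [mE_sum]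
    exact ENNReal.ofReal_ne_top
  have hqle1 : ∀ e : E, qv e ≤ 1 := fun e => ENNReal.ofReal_le_one.mpr (nu_mem G _).2
  have hfin : ∑' e : D, qv e * mE e ≠ ⊤ := by
    refine ne_top_of_le_ne_top hmEfin (ENNReal.tsum_le_tsum fun e => ?_)
    calc qv e.1 * mE e.1 ≤ 1 * mE e.1 := mul_le_mul_left (hqle1 e.1) _
      _ = mE e.1 := one_mul _
  have step2 : ∑' e : D, qv e * mE e < ∑' e : D, pw e * mE e := by
    refine ENNReal.tsum_lt_tsum (i := ⟨e₀, he₀⟩) hfin (fun e => ?_) ?_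
    · refine mul_le_mul_left ?_ _
      exact ENNReal.ofReal_le_ofReal (hpoint e.1 e.2).le
    · have hmne : mE e₀ ≠ 0 := by
        rw [hmE]
        simp only [ne_eq, ENNReal.ofReal_eq_zero, not_le]
        exact pt_pos G e₀
      have hmtop : mE e₀ ≠ ⊤ := ENNReal.ofReal_ne_top
      rw [ENNReal.mul_lt_mul_iff_left hmne hmtop]
      have hlt := hpoint e₀ he₀
      have hposW : 0 < G.nu (W ⁻¹' {W e₀}) := lt_of_le_of_lt (nu_mem G _).1 hlt
      exact (ENNReal.ofReal_lt_ofReal_iff hposW).mpr hlt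
  exact absurd (lt_of_le_of_lt step1 (lt_of_lt_of_le step2 step3)) (lt_irrefl _)

end Aux


/-- Theorem 1 (uniqueness; Lemma A.4): at most one function satisfies the
Theorem-1 conditions. -/
theorem stmt_2 {E : Type u} [Countable E] (G : DGame E) (V W : E → ℝ)
    (hV : G.Thm1Conds V) (hW : G.Thm1Conds W) : V = W := by
  have h1 := key G hV hW
  have h2 := key G hW hV
  funext e
  have h1' : ¬ V e < W e := fun hc => (Set.eq_empty_iff_forall_notMem.mp h1 e) hc
  have h2' : ¬ W e < V e := fun hc => (Set.eq_empty_iff_forall_notMem.mp h2 e) hc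
  linarith [not_lt.mp h1', not_lt.mp h2']
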